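/- The Cayley map is a homomorphism for multiplication: for guarded formal power series r₁, r₂ over a finite semiring S, cay(r₁·r₂)_{w,v} = Σ_{u ∈ Gs} cay(r₁)_{w,u} · cay(r₂)_{u,v}, where the sum exists because only finitely many summands are nonzero (equivalently, because S is finite and additively idempotent the sum of the finitely many distinct values exists). -/

import Mathlib

/-- A guarded string `G₁a₁G₂…a_{k-1}G_k`: a list of atoms interleaved with a list of
letters, with one more atom than letters. -/
structure GuardedString (A B : Type*) where
  atoms : List A
  letters : List B
  len : atoms.length = letters.length + 1

namespace GuardedString

variable {A B : Type*}

theorem atoms_ne_nil (σ : GuardedString A B) : σ.atoms ≠ [] := by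
  intro h
  have hlen := σ.len
  rw [h] at hlen
  simp at hlen

/-- The head (first atom) of a guarded string. -/
def hd (σ : GuardedString A B) : A := σ.atoms.head σ.atoms_ne_nil

/-- The tail (last atom) of a guarded string. -/
def tl (σ : GuardedString A B) : A := σ.atoms.getLast σ.atoms_ne_nil

/-- The fusion product: defined when `tl σ = hd τ`, joining the two strings and
identifying the shared atom; undefined (`none`) otherwise. -/
def fuse [DecidableEq A] (σ τ : GuardedString A B) : Option (GuardedString A B) :=
  if σ.tl = τ.hd then
    some ⟨σ.atoms ++ τ.atoms.tail, σ.letters ++ τ.letters, by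
      simp [List.length_append, List.length_tail, σ.len, τ.len]; omega⟩
  else none

/-- The guarded string consisting of a single atom. -/
def ofAtom (G : A) : GuardedString A B := ⟨[G], [], by simp⟩

end GuardedString

open Classical in
/-- The Cayley matrix of a guarded formal power series: `cay r w v = r u` if
`v = w ⋄ u` for the (necessarily unique) guarded string `u`, and `0` otherwise. -/
noncomputable def cay {A B S : Type*} [DecidableEq A] [Semiring S]
    (r : GuardedString A B → S) :
    GuardedString A B → GuardedString A B → S := fun w v =>
  if h : ∃ u : GuardedString A B, w.fuse u = some v then r h.choose else 0

namespace GuardedString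

/-- The prefix of a guarded string consisting of the first `i` letters (and `i+1` atoms). -/
def takeGS {A B : Type*} (w : GuardedString A B) (i : ℕ) : GuardedString A B :=
  ⟨w.atoms.take (i + 1), w.letters.take i, by simp [w.len] <;> omega⟩

/-- The suffix of a guarded string obtained by dropping the first `i` letters. -/
def dropGS {A B : Type*} (w : GuardedString A B) (i : ℕ) : GuardedString A B :=
  ⟨w.atoms.drop (min i w.letters.length), w.letters.drop i, by simp [w.len]; omega⟩

end GuardedString

/-- The Cauchy product of guarded formal power series:
`(r₁·r₂)(w) = Σ {r₁(u)·r₂(v) : w = u ⋄ v}`, realized by summing over all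
factorizations of `w` (one for each split position of its letters). -/
def gmul {A B S : Type*} [Semiring S] (r₁ r₂ : GuardedString A B → S) :
    GuardedString A B → S := fun w =>
  ∑ i ∈ Finset.range (w.letters.length + 1), r₁ (w.takeGS i) * r₂ (w.dropGS i)

namespace GuardedString

variable {A B : Type*}

theorem ext' {σ τ : GuardedString A B} (h1 : σ.atoms = τ.atoms)
    (h2 : σ.letters = τ.letters) : σ = τ := by
  cases σ; cases τ; simp_all

theorem some_hd (σ : GuardedString A B) : (some σ.hd : Option A) = σ.atoms[0]? := by
  rw [hd, ← List.head?_eq_head σ.atoms_ne_nil, List.head?_eq_getElem?]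

theorem some_tl (σ : GuardedString A B) :
    (some σ.tl : Option A) = σ.atoms[σ.letters.length]? := by
  rw [tl, ← List.getLast?_eq_getLast σ.atoms_ne_nil, List.getLast?_eq_getElem?,
    σ.len, Nat.add_sub_cancel]

theorem fuse_eq_some_iff [DecidableEq A] {σ τ v : GuardedString A B} :
    σ.fuse τ = some v ↔
      σ.tl = τ.hd ∧ v.atoms = σ.atoms ++ τ.atoms.tail ∧ v.letters = σ.letters ++ τ.letters := by
  unfold fuse
  split_ifs with h
  · constructor
    · intro hv
      injection hv with hv
      subst hv
      exact ⟨h, rfl, rfl⟩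
    · rintro ⟨-, h1, h2⟩
      exact congrArg some (ext' h1.symm h2.symm)
  · constructor
    · intro hc; simp at hc
    · rintro ⟨h1, -, -⟩; exact absurd h1 h

theorem fuse_decomp [DecidableEq A] {u τ v : GuardedString A B} (h : u.fuse τ = some v) :
    u.letters.length ≤ v.letters.length ∧
      u = v.takeGS u.letters.length ∧ τ = v.dropGS u.letters.length := by
  rw [fuse_eq_some_iff] at h
  obtain ⟨htl, ha, hl⟩ := h
  have hlen : v.letters.length = u.letters.length + τ.letters.length := by
    rw [hl]; simp
  refine ⟨by omega, ?_, ?_⟩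
  · refine (ext' ?_ ?_).symm
    · show v.atoms.take (u.letters.length + 1) = u.atoms
      rw [ha, ← u.len, List.take_left]
    · show v.letters.take u.letters.length = u.letters
      rw [hl, List.take_left]
  · refine (ext' ?_ ?_).symm
    · show v.atoms.drop (min u.letters.length v.letters.length) = τ.atoms
      rw [Nat.min_eq_left (by omega), ha, List.drop_append]
      have h1 : u.atoms.drop u.letters.length = [u.tl] := by
        rw [List.drop_eq_getElem_cons (by rw [u.len]; omega),
          List.drop_eq_nil_of_le (by rw [u.len])]
        congr 1
        apply Option.some.inj
        rw [some_tl, List.getElem?_eq_getElem (by rw [u.len]; omega)]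
      rw [h1, show u.letters.length - u.atoms.length = 0 by rw [u.len]; omega,
        List.drop_zero, htl, List.singleton_append]
      exact List.cons_head_tail τ.atoms_ne_nil
    · show v.letters.drop u.letters.length = τ.letters
      rw [hl, List.drop_left]

theorem takeGS_takeGS (v : GuardedString A B) {m i : ℕ} (h : m ≤ i) :
    (v.takeGS i).takeGS m = v.takeGS m := by
  apply ext'
  · show (v.atoms.take (i + 1)).take (m + 1) = v.atoms.take (m + 1)
    rw [List.take_take, Nat.min_eq_left (by omega)]
  · show (v.letters.take i).take m = v.letters.take m
    rw [List.take_take, Nat.min_eq_left h]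

theorem takeGS_fuse_dropGS [DecidableEq A] (v : GuardedString A B) {j : ℕ}
    (hj : j ≤ v.letters.length) :
    (v.takeGS j).fuse (v.dropGS j) = some v := by
  have hj' : j + 1 ≤ v.atoms.length := by rw [v.len]; omega
  rw [fuse_eq_some_iff]
  refine ⟨?_, ?_, ?_⟩
  · apply Option.some.inj
    rw [some_tl, some_hd]
    show (v.atoms.take (j + 1))[(v.letters.take j).length]?
        = (v.atoms.drop (min j v.letters.length))[0]?
    rw [List.getElem?_take, List.getElem?_drop, List.length_take]
    simp [Nat.min_eq_left hj]
  · show v.atoms = v.atoms.take (j + 1) ++ (v.atoms.drop (min j v.letters.length)).tail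
    rw [Nat.min_eq_left hj, List.tail_drop]
    exact (List.take_append_drop (j + 1) v.atoms).symm
  · show v.letters = v.letters.take j ++ v.letters.drop j
    exact (List.take_append_drop j v.letters).symm

theorem fuse_takeGS [DecidableEq A] (v : GuardedString A B) {m i : ℕ}
    (h : m + i ≤ v.letters.length) :
    (v.takeGS m).fuse ((v.dropGS m).takeGS i) = some (v.takeGS (m + i)) := by
  have hm : m ≤ v.letters.length := by omega
  have hda : (v.dropGS m).atoms = v.atoms.drop m := by
    show v.atoms.drop (min m v.letters.length) = v.atoms.drop m
    rw [Nat.min_eq_left hm]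
  have hlen : m + 1 ≤ v.atoms.length := by rw [v.len]; omega
  rw [fuse_eq_some_iff]
  refine ⟨?_, ?_, ?_⟩
  · apply Option.some.inj
    rw [some_tl, some_hd]
    show (v.atoms.take (m + 1))[(v.letters.take m).length]?
        = ((v.dropGS m).atoms.take (i + 1))[0]?
    rw [hda, List.getElem?_take, List.getElem?_take, List.getElem?_drop, List.length_take]
    simp [Nat.min_eq_left hm]
  · show v.atoms.take (m + i + 1) = v.atoms.take (m + 1) ++ ((v.dropGS m).atoms.take (i + 1)).tail
    rw [hda, ← List.drop_one, List.drop_take, List.drop_drop, Nat.add_sub_cancel,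
      show m + i + 1 = (m + 1) + i by omega, List.take_add]
  · show v.letters.take (m + i) = v.letters.take m ++ (v.letters.drop m).take i
    exact List.take_add (l := v.letters) (i := m) (j := i)

theorem dropGS_dropGS (v : GuardedString A B) {m i : ℕ} (h : m + i ≤ v.letters.length) :
    (v.dropGS m).dropGS i = v.dropGS (m + i) := by
  have hl : (v.dropGS m).letters.length = v.letters.length - m := by
    show (v.letters.drop m).length = v.letters.length - m
    simp
  apply ext'
  · show (v.dropGS m).atoms.drop (min i (v.dropGS m).letters.length)
        = v.atoms.drop (min (m + i) v.letters.length)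
    have hda : (v.dropGS m).atoms = v.atoms.drop m := by
      show v.atoms.drop (min m v.letters.length) = v.atoms.drop m
      rw [Nat.min_eq_left (by omega)]
    rw [hda, hl, Nat.min_eq_left (by omega), Nat.min_eq_left (by omega), List.drop_drop]
  · show (v.letters.drop m).drop i = v.letters.drop (m + i)
    rw [List.drop_drop]

theorem cay_eq {S : Type*} [DecidableEq A] [Semiring S] {r : GuardedString A B → S}
    {w u m : GuardedString A B} (h : w.fuse u = some m) : cay r w m = r u := by
  have hex : ∃ u, w.fuse u = some m := ⟨u, h⟩
  unfold cay
  rw [dif_pos hex]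
  congr 1
  have h1 := (fuse_decomp hex.choose_spec).2.2
  have h2 := (fuse_decomp h).2.2
  rw [h2, h1]

theorem cay_eq_zero {S : Type*} [DecidableEq A] [Semiring S] {r : GuardedString A B → S}
    {w m : GuardedString A B} (h : ¬ ∃ u, w.fuse u = some m) : cay r w m = 0 := by
  unfold cay
  rw [dif_neg h]

end GuardedString

open GuardedString in
/-- The Cayley map is a homomorphism for multiplication:
`cay(r₁·r₂)_{w,v} = Σ_{u ∈ Gs} cay(r₁)_{w,u} · cay(r₂)_{u,v}`, where the sum exists
because only finitely many summands are nonzero. -/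
theorem stmt18 {A B S : Type*} [DecidableEq A] [Semiring S] [Fintype S]
    (hid : ∀ x : S, x + x = x)
    (r₁ r₂ : GuardedString A B → S) (w v : GuardedString A B) :
    {u : GuardedString A B | cay r₁ w u * cay r₂ u v ≠ 0}.Finite ∧
    cay (gmul r₁ r₂) w v = ∑ᶠ u : GuardedString A B, cay r₁ w u * cay r₂ u v := by
  classical
  have key : ∀ u : GuardedString A B, cay r₁ w u * cay r₂ u v ≠ 0 →
      ∃ i, w.letters.length ≤ i ∧ i ≤ v.letters.length ∧ u = v.takeGS i ∧
        w = v.takeGS w.letters.length := by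
    intro u hu
    have h1 : cay r₁ w u ≠ 0 := by intro h0; exact hu (by rw [h0, zero_mul])
    have h2 : cay r₂ u v ≠ 0 := by intro h0; exact hu (by rw [h0, mul_zero])
    have he1 : ∃ u', w.fuse u' = some u := by
      by_contra hc; exact h1 (cay_eq_zero hc)
    have he2 : ∃ v', u.fuse v' = some v := by
      by_contra hc; exact h2 (cay_eq_zero hc)
    obtain ⟨u', hu'⟩ := he1
    obtain ⟨v', hv'⟩ := he2
    obtain ⟨hle2, hueq, -⟩ := fuse_decomp hv'
    obtain ⟨hle1, hweq, -⟩ := fuse_decomp hu'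
    refine ⟨u.letters.length, hle1, hle2, hueq, ?_⟩
    conv_lhs => rw [hweq, hueq]
    exact takeGS_takeGS v hle1
  have hfin : Function.support (fun u : GuardedString A B => cay r₁ w u * cay r₂ u v) ⊆
      ↑((Finset.Icc w.letters.length v.letters.length).image (fun j => v.takeGS j)) := by
    intro u hu
    obtain ⟨i, h1, h2, h3, -⟩ := key u hu
    simp only [Finset.coe_image, Set.mem_image, Finset.mem_coe, Finset.mem_Icc]
    exact ⟨i, ⟨h1, h2⟩, h3.symm⟩
  constructor
  · exact Set.Finite.subset (Finset.finite_toSet _) hfin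
  · rw [finsum_eq_finset_sum_of_support_subset _ hfin]
    by_cases hex : ∃ x, w.fuse x = some v
    · obtain ⟨x, hx⟩ := hex
      obtain ⟨hmn, hw, hxeq⟩ := fuse_decomp hx
      rw [cay_eq hx]
      have hinj : ∀ a ∈ Finset.Icc w.letters.length v.letters.length,
          ∀ b ∈ Finset.Icc w.letters.length v.letters.length,
          v.takeGS a = v.takeGS b → a = b := by
        intro a ha b hb hab
        have hab' := congrArg (fun σ : GuardedString A B => σ.letters.length) hab
        simp only [takeGS, List.length_take] at hab'
        simp only [Finset.mem_Icc] at ha hb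
        omega
      rw [Finset.sum_image hinj]
      have hterm : ∀ j ∈ Finset.Icc w.letters.length v.letters.length,
          cay r₁ w (v.takeGS j) * cay r₂ (v.takeGS j) v
            = r₁ (x.takeGS (j - w.letters.length)) * r₂ (x.dropGS (j - w.letters.length)) := by
        intro j hj
        simp only [Finset.mem_Icc] at hj
        have hji : w.letters.length + (j - w.letters.length) = j := by omega
        have h1 : cay r₁ w (v.takeGS j) = r₁ (x.takeGS (j - w.letters.length)) := by
          have hh := cay_eq (r := r₁) (fuse_takeGS v
            (show w.letters.length + (j - w.letters.length) ≤ v.letters.length by omega))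
          rw [hji, ← hw, ← hxeq] at hh
          exact hh
        have h2 : cay r₂ (v.takeGS j) v = r₂ (x.dropGS (j - w.letters.length)) := by
          rw [cay_eq (takeGS_fuse_dropGS v (show j ≤ v.letters.length by omega)), hxeq,
            dropGS_dropGS v (by omega), hji]
        rw [h1, h2]
      rw [Finset.sum_congr rfl hterm]
      have hxlen : x.letters.length = v.letters.length - w.letters.length := by
        rw [hxeq]
        show (v.letters.drop w.letters.length).length = _
        simp
      have hIcc : Finset.Icc w.letters.length v.letters.length
          = Finset.Ico w.letters.length (v.letters.length + 1) := by
        rw [Nat.Icc_eq_range', Nat.Ico_eq_range']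
      rw [hIcc, Finset.sum_Ico_eq_sum_range, gmul, hxlen,
        show v.letters.length + 1 - w.letters.length
          = v.letters.length - w.letters.length + 1 by omega]
      apply Finset.sum_congr rfl
      intro k _
      rw [Nat.add_sub_cancel_left]
    · rw [cay_eq_zero hex]
      symm
      apply Finset.sum_eq_zero
      intro u hu
      by_contra hc
      obtain ⟨i, h1, h2, h3, h4⟩ := key u hc
      have hfd : (v.takeGS w.letters.length).fuse (v.dropGS w.letters.length) = some v :=
        takeGS_fuse_dropGS v (le_trans h1 h2)
      rw [← h4] at hfd
      exact hex ⟨_, hfd⟩
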